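/- Let m be an odd positive integer and define H_2 = {A : A is an m-th order n-dimensional real symmetric tensor with A − N(A) copositive}. Then H_2 is a convex cone of symmetric tensors, and N^+_{m,n} ⊆ H_2 ⊆ COP_{m,n}, where N^+_{m,n} is the set of m-th order n-dimensional symmetric tensors with all entries nonnegative and COP_{m,n} is the set of m-th order n-dimensional symmetric copositive tensors. -/
import Mathlib


open scoped BigOperators

/-- `A x^m`: the homogeneous form of an `m`-th order `n`-dimensional tensor. -/
def tApply {m n : ℕ} (A : (Fin m → Fin n) → ℝ) (x : Fin n → ℝ) : ℝ :=
  ∑ i : Fin m → Fin n, A i * ∏ t, x (i t)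

/-- A tensor is symmetric if its entries are invariant under permutations of indices. -/
def IsSymT {m n : ℕ} (A : (Fin m → Fin n) → ℝ) : Prop :=
  ∀ (σ : Equiv.Perm (Fin m)) (i : Fin m → Fin n), A (i ∘ σ) = A i

/-- Copositivity: `A x^m ≥ 0` for all `x` in the nonnegative orthant. -/
def Copositive {m n : ℕ} (A : (Fin m → Fin n) → ℝ) : Prop :=
  ∀ x : Fin n → ℝ, (∀ j, 0 ≤ x j) → 0 ≤ tApply A x

/-- `N(A)`: keeps the positive off-diagonal entries of `A` and sets all the other
entries to `0`. -/
noncomputable def NPart {m n : ℕ} (A : (Fin m → Fin n) → ℝ) : (Fin m → Fin n) → ℝ :=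
  fun i => if 0 < A i ∧ (∃ s t, i s ≠ i t) then A i else 0

lemma tApply_mono {m n : ℕ} {A B : (Fin m → Fin n) → ℝ} (h : ∀ i, A i ≤ B i)
    {x : Fin n → ℝ} (hx : ∀ j, 0 ≤ x j) : tApply A x ≤ tApply B x :=
  Finset.sum_le_sum fun i _ =>
    mul_le_mul_of_nonneg_right (h i) (Finset.prod_nonneg fun t _ => hx _)

lemma tApply_nonneg {m n : ℕ} {A : (Fin m → Fin n) → ℝ} (hA : ∀ i, 0 ≤ A i)
    {x : Fin n → ℝ} (hx : ∀ j, 0 ≤ x j) : 0 ≤ tApply A x :=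
  Finset.sum_nonneg fun i _ =>
    mul_nonneg (hA i) (Finset.prod_nonneg fun t _ => hx _)

lemma NPart_nonneg {m n : ℕ} (A : (Fin m → Fin n) → ℝ) (i : Fin m → Fin n) :
    0 ≤ NPart A i := by
  unfold NPart
  split_ifs with hc
  · exact le_of_lt hc.1
  · exact le_refl 0

lemma le_NPart_of_offdiag {m n : ℕ} (A : (Fin m → Fin n) → ℝ) {i : Fin m → Fin n}
    (h : ∃ s t, i s ≠ i t) : A i ≤ NPart A i := by
  unfold NPart
  split_ifs with hc
  · exact le_refl _
  · by_contra hlt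
    push_neg at hlt
    exact hc ⟨hlt, h⟩

lemma NPart_diag {m n : ℕ} (A : (Fin m → Fin n) → ℝ) {i : Fin m → Fin n}
    (h : ¬ ∃ s t, i s ≠ i t) : NPart A i = 0 := by
  unfold NPart
  rw [if_neg (fun hc => h hc.2)]

lemma tApply_smul {m n : ℕ} (c : ℝ) (A : (Fin m → Fin n) → ℝ) (x : Fin n → ℝ) :
    tApply (c • A) x = c * tApply A x := by
  simp [tApply, Finset.mul_sum, mul_assoc]

theorem stmt8 (m n : ℕ) (hm : Odd m)
    (H2 : Set ((Fin m → Fin n) → ℝ))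
    (hH2 : H2 = {A | IsSymT A ∧ Copositive (A - NPart A)}) :
    Convex ℝ H2 ∧ (∀ (c : ℝ), 0 ≤ c → ∀ A ∈ H2, c • A ∈ H2) ∧
      {A : (Fin m → Fin n) → ℝ | IsSymT A ∧ ∀ i, 0 ≤ A i} ⊆ H2 ∧
      H2 ⊆ {A : (Fin m → Fin n) → ℝ | IsSymT A ∧ Copositive A} := by
  subst hH2
  refine ⟨?_, ?_, ?_, ?_⟩
  · -- Convex
    rintro A ⟨hAs, hAc⟩ B ⟨hBs, hBc⟩ a b ha hb hab
    refine ⟨fun σ i => by simp [hAs σ i, hBs σ i], ?_⟩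
    intro x hx
    have key : ∀ i, (a • (A - NPart A) + b • (B - NPart B)) i
        ≤ ((a • A + b • B) - NPart (a • A + b • B)) i := by
      intro i
      have h1 : NPart (a • A + b • B) i ≤ a * NPart A i + b * NPart B i := by
        have hNA := NPart_nonneg A i
        have hNB := NPart_nonneg B i
        by_cases hc : 0 < (a • A + b • B) i ∧ ∃ s t, i s ≠ i t
        · have h1 : A i ≤ NPart A i := le_NPart_of_offdiag A hc.2
          have h2 : B i ≤ NPart B i := le_NPart_of_offdiag B hc.2
          have : NPart (a • A + b • B) i = (a • A + b • B) i := if_pos hc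
          rw [this]
          simp only [Pi.add_apply, Pi.smul_apply, smul_eq_mul]
          nlinarith
        · have : NPart (a • A + b • B) i = 0 := if_neg hc
          rw [this]; nlinarith
      simp only [Pi.add_apply, Pi.smul_apply, Pi.sub_apply, smul_eq_mul] at h1 ⊢
      nlinarith [h1]
    have hmono := tApply_mono key hx
    have hlin : tApply (a • (A - NPart A) + b • (B - NPart B)) x
        = a * tApply (A - NPart A) x + b * tApply (B - NPart B) x := by
      simp [tApply, Finset.mul_sum, ← Finset.sum_add_distrib, add_mul, mul_assoc]
    have hA0 := hAc x hx
    have hB0 := hBc x hx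
    nlinarith [hmono, hlin]
  · -- Cone
    rintro c hc A ⟨hAs, hAc⟩
    refine ⟨fun σ i => by simp [hAs σ i], ?_⟩
    have hN : NPart (c • A) = c • NPart A := by
      funext i
      rcases eq_or_lt_of_le hc with h0 | hpos
      · simp [NPart, ← h0]
      · unfold NPart
        simp only [Pi.smul_apply, smul_eq_mul]
        by_cases hp : 0 < A i ∧ ∃ s t, i s ≠ i t
        · rw [if_pos ⟨by nlinarith [hp.1], hp.2⟩, if_pos hp]
        · rw [if_neg, if_neg hp, mul_zero]
          intro ⟨h1, h2⟩
          exact hp ⟨by nlinarith, h2⟩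
    intro x hx
    have : c • A - NPart (c • A) = c • (A - NPart A) := by rw [hN]; module
    rw [this, tApply_smul]
    exact mul_nonneg hc (hAc x hx)
  · -- nonneg tensors ⊆ H2
    rintro A ⟨hAs, hA⟩
    refine ⟨hAs, fun x hx => tApply_nonneg (fun i => ?_) hx⟩
    simp only [Pi.sub_apply]
    unfold NPart
    split_ifs with hc
    · simp
    · simpa using hA i
  · -- H2 ⊆ COP
    rintro A ⟨hAs, hAc⟩
    refine ⟨hAs, fun x hx => ?_⟩
    have h1 := hAc x hx
    have h2 : tApply (A - NPart A) x ≤ tApply A x :=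
      tApply_mono (fun i => by simp [NPart_nonneg A i]) hx
    linarith
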